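/- Let T* > 0, let f₀ : [0,T*] → ℝ be integrable, and let a : [0,T*] × [0,T*] → ℝ be jointly measurable with ∫₀^{T*}∫₀^{T*} |a(s,u)| ds du < ∞. Define f(t,u) = f₀(u) + ∫₀ᵗ a(s,u) ds. Then for all 0 ≤ t ≤ T ≤ T*: ∫_t^T f(t,u) du = ∫₀^T f₀(u) du + ∫₀ᵗ ( ∫_s^T a(s,u) du ) ds − ∫₀ᵗ f(u,u) du. -/

import Mathlib

open MeasureTheory intervalIntegral Real

/-- Fubini-type rearrangement of the forward-rate drift (drift part of the paper's
Lemma on the HJM representation). -/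
theorem stmt5 (Tstar : ℝ) (hT : 0 < Tstar)
    (f₀ : ℝ → ℝ) (hf₀ : IntegrableOn f₀ (Set.Icc 0 Tstar))
    (a : ℝ → ℝ → ℝ) (hma : Measurable (Function.uncurry a))
    (hint : IntegrableOn (Function.uncurry a) (Set.Icc 0 Tstar ×ˢ Set.Icc 0 Tstar))
    (f : ℝ → ℝ → ℝ)
    (hf : ∀ t u, f t u = f₀ u + ∫ s in (0:ℝ)..t, a s u) :
    ∀ t T, 0 ≤ t → t ≤ T → T ≤ Tstar →
      (∫ u in t..T, f t u) =
        (∫ u in (0:ℝ)..T, f₀ u) + (∫ s in (0:ℝ)..t, ∫ u in s..T, a s u)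
          - ∫ u in (0:ℝ)..t, f u u := by
  intro t T ht htT hTs
  have h0T : (0:ℝ) ≤ T := ht.trans htT
  have hsub1 : Set.Ioc (0:ℝ) t ⊆ Set.Icc 0 Tstar :=
    Set.Ioc_subset_Icc_self.trans (Set.Icc_subset_Icc le_rfl (htT.trans hTs))
  have hsub2 : Set.Ioc t T ⊆ Set.Icc 0 Tstar :=
    fun x hx => ⟨ht.trans hx.1.le, hx.2.trans hTs⟩
  have hsub3 : Set.Ioc (0:ℝ) T ⊆ Set.Icc 0 Tstar :=
    Set.Ioc_subset_Icc_self.trans (Set.Icc_subset_Icc le_rfl hTs)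
  have hrect : ∀ s1 s2 : Set ℝ, s1 ⊆ Set.Icc 0 Tstar → s2 ⊆ Set.Icc 0 Tstar →
      Integrable (Function.uncurry a) ((volume.restrict s1).prod (volume.restrict s2)) := by
    intro s1 s2 h1 h2
    rw [Measure.prod_restrict]
    exact hint.mono_set (Set.prod_mono h1 h2)
  set A : ℝ × ℝ → ℝ := fun p => if p.1 ≤ p.2 then a p.1 p.2 else 0 with hAdef
  have hmA : Measurable A :=
    Measurable.ite (measurableSet_le measurable_fst measurable_snd) hma measurable_const
  have hA : Integrable A
      ((volume.restrict (Set.Ioc (0:ℝ) t)).prod (volume.restrict (Set.Ioc (0:ℝ) t))) := by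
    refine (hrect _ _ hsub1 hsub1).mono hmA.aestronglyMeasurable ?_
    filter_upwards with p
    by_cases h : p.1 ≤ p.2 <;> simp [A, h, Function.uncurry]
  -- slice identities for A
  have hAslice_u : ∀ u ∈ Set.Ioc (0:ℝ) t,
      (∫ s in Set.Ioc (0:ℝ) t, A (s, u)) = ∫ s in Set.Ioc (0:ℝ) u, a s u := by
    intro u hu
    have h1 : (fun s => A (s, u)) = Set.indicator (Set.Iic u) (fun s => a s u) := by
      funext s; simp [A, Set.indicator_apply]
    rw [h1, setIntegral_indicator measurableSet_Iic, Set.Ioc_inter_Iic,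
      min_eq_right hu.2]
  have hAslice_s : ∀ s ∈ Set.Ioc (0:ℝ) t,
      (∫ u in Set.Ioc (0:ℝ) t, A (s, u)) = ∫ u in Set.Ioc s t, a s u := by
    intro s hs
    have h1 : (fun u => A (s, u)) = Set.indicator (Set.Ici s) (fun u => a s u) := by
      funext u; simp [A, Set.indicator_apply]
    have h2 : Set.Ioc (0:ℝ) t ∩ Set.Ici s = Set.Icc s t := by
      ext x
      simp only [Set.mem_inter_iff, Set.mem_Ioc, Set.mem_Ici, Set.mem_Icc]
      constructor
      · rintro ⟨⟨_, hx2⟩, hx3⟩; exact ⟨hx3, hx2⟩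
      · rintro ⟨hx1, hx2⟩; exact ⟨⟨hs.1.trans_le hx1, hx2⟩, hx1⟩
    rw [h1, setIntegral_indicator measurableSet_Ici, h2, integral_Icc_eq_integral_Ioc]
  -- Fubini swaps
  have swapR : (∫ s in Set.Ioc (0:ℝ) t, ∫ u in Set.Ioc t T, a s u)
      = ∫ u in Set.Ioc t T, ∫ s in Set.Ioc (0:ℝ) t, a s u :=
    integral_integral_swap (hrect _ _ hsub1 hsub2)
  have swapA : (∫ s in Set.Ioc (0:ℝ) t, ∫ u in Set.Ioc (0:ℝ) t, A (s, u))
      = ∫ u in Set.Ioc (0:ℝ) t, ∫ s in Set.Ioc (0:ℝ) t, A (s, u) :=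
    integral_integral_swap (f := fun s u => A (s, u)) hA
  -- rewrite interval integrals as set integrals
  rw [integral_of_le htT, integral_of_le h0T, integral_of_le ht, integral_of_le ht]
  -- Piece 1: left-hand side
  have hL : (∫ u in Set.Ioc t T, f t u)
      = (∫ u in Set.Ioc t T, f₀ u)
        + ∫ u in Set.Ioc t T, ∫ s in Set.Ioc (0:ℝ) t, a s u := by
    have h1 : (∫ u in Set.Ioc t T, f t u)
        = ∫ u in Set.Ioc t T, (f₀ u + ∫ s in Set.Ioc (0:ℝ) t, a s u) := by
      refine integral_congr_ae (Filter.Eventually.of_forall fun u => ?_)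
      rw [hf, integral_of_le ht]
    rw [h1]
    exact integral_add (hf₀.mono_set hsub2) ((hrect _ _ hsub1 hsub2).integral_prod_right)
  -- Piece 2: splitting ∫₀ᵀ f₀
  have hP2 : (∫ u in Set.Ioc (0:ℝ) T, f₀ u)
      = (∫ u in Set.Ioc (0:ℝ) t, f₀ u) + ∫ u in Set.Ioc t T, f₀ u := by
    rw [← Set.Ioc_union_Ioc_eq_Ioc ht htT]
    exact setIntegral_union (Set.Ioc_disjoint_Ioc_of_le le_rfl) measurableSet_Ioc
      (hf₀.mono_set hsub1) (hf₀.mono_set hsub2)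
  -- Piece 3: the diagonal term
  have hP3 : (∫ u in Set.Ioc (0:ℝ) t, f u u)
      = (∫ u in Set.Ioc (0:ℝ) t, f₀ u)
        + ∫ u in Set.Ioc (0:ℝ) t, ∫ s in Set.Ioc (0:ℝ) t, A (s, u) := by
    have h1 : (∫ u in Set.Ioc (0:ℝ) t, f u u)
        = ∫ u in Set.Ioc (0:ℝ) t, (f₀ u + ∫ s in Set.Ioc (0:ℝ) t, A (s, u)) := by
      refine setIntegral_congr_ae measurableSet_Ioc
        (Filter.Eventually.of_forall fun u hu => ?_)
      rw [hf, integral_of_le hu.1.le, hAslice_u u hu]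
    rw [h1]
    exact integral_add (hf₀.mono_set hsub1) hA.integral_prod_right
  -- Piece 4: the double integral term
  have hP4 : (∫ s in Set.Ioc (0:ℝ) t, ∫ u in s..T, a s u)
      = (∫ s in Set.Ioc (0:ℝ) t, ∫ u in Set.Ioc (0:ℝ) t, A (s, u))
        + ∫ s in Set.Ioc (0:ℝ) t, ∫ u in Set.Ioc t T, a s u := by
    have hae : ∀ᵐ s ∂(volume.restrict (Set.Ioc (0:ℝ) t)),
        (∫ u in s..T, a s u)
          = (∫ u in Set.Ioc (0:ℝ) t, A (s, u)) + ∫ u in Set.Ioc t T, a s u := by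
      filter_upwards [(hrect _ _ hsub1 hsub3).prod_right_ae,
        ae_restrict_mem measurableSet_Ioc] with s hs hmem
      have hIa : IntegrableOn (fun u => a s u) (Set.Ioc 0 T) := hs
      have i1 : IntervalIntegrable (a s) volume s t :=
        (intervalIntegrable_iff_integrableOn_Ioc_of_le hmem.2).mpr
          (hIa.mono_set (Set.Ioc_subset_Ioc hmem.1.le htT))
      have i2 : IntervalIntegrable (a s) volume t T :=
        (intervalIntegrable_iff_integrableOn_Ioc_of_le htT).mpr
          (hIa.mono_set (Set.Ioc_subset_Ioc ht le_rfl))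
      rw [← integral_add_adjacent_intervals i1 i2, integral_of_le hmem.2,
        integral_of_le htT, hAslice_s s hmem]
    rw [integral_congr_ae hae]
    exact integral_add hA.integral_prod_left ((hrect _ _ hsub1 hsub2).integral_prod_left)
  rw [hL, hP2, hP3, hP4, swapR, swapA]
  ring
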